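/- Let f : {-1,1}^n → {-1,1} be a symmetric QTF, i.e., a QTF invariant under all permutations of its n coordinates. Then I[f] ≤ n · 2^{-n+1} · C(n, (n-1)/2) if n is odd, and I[f] ≤ n · 2^{-n} · ( 2·C(n, (n-2)/2) + C(n, n/2) ) if n is even, where C(a,b) denotes the binomial coefficient. -/

import Mathlib

open Finset
open scoped Classical

noncomputable section

/-- The Boolean cube `{-1,1}^V` as a finset of functions `V → ℤ`. -/
def cube (V : Type*) [Fintype V] [DecidableEq V] : Finset (V → ℤ) :=
  Fintype.piFinset fun _ => ({-1, 1} : Finset ℤ)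

/-- Negate the `i`-th coordinate. -/
def flipAt {V : Type*} [DecidableEq V] (x : V → ℤ) (i : V) : V → ℤ :=
  Function.update x i (-(x i))

/-- Influence of coordinate `i` on `f`: the probability over a uniform point of the cube
that flipping coordinate `i` changes the value of `f`. -/
def coordInf {V : Type*} [Fintype V] [DecidableEq V] {α : Type*} (f : (V → ℤ) → α) (i : V) : ℝ :=
  (∑ x ∈ cube V, if f x ≠ f (flipAt x i) then (1 : ℝ) else 0) / (cube V).card

/-- Total influence of `f`. -/
def totalInf {V : Type*} [Fintype V] [DecidableEq V] {α : Type*} (f : (V → ℤ) → α) : ℝ :=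
  ∑ i : V, coordInf f i

/-- Sign function, with `sgn 0 = 0`. -/
def sgn (t : ℝ) : ℤ := if 0 < t then 1 else if t < 0 then -1 else 0

/-- A quadratic multilinear polynomial `∑_{i<j} a_{ij} x_i x_j + ∑_i b_i x_i + c`. -/
def quadPoly {V : Type*} [Fintype V] [LinearOrder V] (a : V → V → ℝ) (b : V → ℝ) (c : ℝ)
    (x : V → ℤ) : ℝ :=
  (∑ i : V, ∑ j : V, if i < j then a i j * x i * x j else 0) + (∑ i : V, b i * x i) + c

/-- `f` is a QTF supported on the graph `G`: it has a quadratic representation whose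
cross terms only involve edges of `G`, and whose polynomial is nonvanishing on the cube. -/
def IsQTFSupportedOn {V : Type*} [Fintype V] [LinearOrder V] (G : SimpleGraph V)
    (f : (V → ℤ) → ℤ) : Prop :=
  ∃ a b c, (∀ i j : V, i < j → a i j ≠ 0 → G.Adj i j) ∧
    (∀ x ∈ cube V, quadPoly a b c x ≠ 0) ∧
    (∀ x ∈ cube V, f x = sgn (quadPoly a b c x))

lemma mem_cube {V : Type*} [Fintype V] [DecidableEq V] {x : V → ℤ} :
    x ∈ cube V ↔ ∀ i, x i = -1 ∨ x i = 1 := by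
  simp [cube, Fintype.mem_piFinset]

lemma card_cube (V : Type*) [Fintype V] [DecidableEq V] :
    (cube V).card = 2 ^ Fintype.card V := by
  simp [cube, Fintype.card_piFinset]

lemma coordInf_le_one {V : Type*} [Fintype V] [DecidableEq V] {α : Type*}
    (f : (V → ℤ) → α) (i : V) : coordInf f i ≤ 1 := by
  have h1 : (∑ x ∈ cube V, if f x ≠ f (flipAt x i) then (1 : ℝ) else 0)
      ≤ ∑ x ∈ cube V, (1 : ℝ) := by
    apply Finset.sum_le_sum; intro x _; split <;> norm_num
  have h2 : (0:ℝ) < (cube V).card := by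
    rw [card_cube V]
    positivity
  rw [coordInf, div_le_one h2]
  simpa using h1

lemma totalInf_le_card {V : Type*} [Fintype V] [DecidableEq V] {α : Type*}
    (f : (V → ℤ) → α) : totalInf f ≤ Fintype.card V := by
  calc totalInf f ≤ ∑ _i : V, (1:ℝ) := Finset.sum_le_sum fun i _ => coordInf_le_one f i
  _ = Fintype.card V := by simp

/-- number of coordinates equal to 1 -/
def cnt {n : ℕ} (x : Fin n → ℤ) : ℕ := (univ.filter fun i => x i = 1).card

lemma exists_perm_of_cnt_eq {n : ℕ} {x y : Fin n → ℤ} (hx : x ∈ cube (Fin n))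
    (hy : y ∈ cube (Fin n)) (h : cnt x = cnt y) :
    ∃ σ : Equiv.Perm (Fin n), x ∘ σ = y := by
  classical
  set p : Fin n → Prop := fun i => y i = 1 with hp
  set q : Fin n → Prop := fun i => x i = 1 with hq
  have hcard : Fintype.card {i // p i} = Fintype.card {i // q i} := by
    rw [Fintype.card_subtype, Fintype.card_subtype]
    exact h.symm
  have hcard' : Fintype.card {i // ¬ p i} = Fintype.card {i // ¬ q i} := by
    have := Fintype.card_subtype_compl p
    have h2 := Fintype.card_subtype_compl q
    omega
  obtain ⟨e⟩ := Fintype.card_eq.mp hcard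
  obtain ⟨e'⟩ := Fintype.card_eq.mp hcard'
  refine ⟨((Equiv.sumCompl p).symm.trans ((e.sumCongr e').trans (Equiv.sumCompl q))), ?_⟩
  funext i
  simp only [Function.comp_apply, Equiv.trans_apply]
  by_cases hi : p i
  · rw [Equiv.sumCompl_symm_apply_of_pos (p := p) hi]
    simp only [Equiv.sumCongr_apply, Sum.map_inl, Equiv.sumCompl_apply_inl]
    have h1 : x ((e ⟨i, hi⟩ : {i // q i}) : Fin n) = 1 := (e ⟨i, hi⟩).2
    have h2 : y i = 1 := hi
    rw [h1, h2]
  · rw [Equiv.sumCompl_symm_apply_of_neg (p := p) hi]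
    simp only [Equiv.sumCongr_apply, Sum.map_inr, Equiv.sumCompl_apply_inr]
    have hx1 : x ((e' ⟨i, hi⟩ : {i // ¬ q i}) : Fin n) ≠ 1 := (e' ⟨i, hi⟩).2
    have hxm := (mem_cube.mp hx) ((e' ⟨i, hi⟩ : {i // ¬ q i}) : Fin n)
    have hym := (mem_cube.mp hy) i
    have h2 : y i = -1 := by
      rcases hym with h'|h'
      · exact h'
      · exact absurd h' hi
    rcases hxm with h'|h'
    · rw [h', h2]
    · exact absurd h' hx1

lemma quad_no_alt {al be ga s1 s2 s3 s4 : ℝ} (h12 : s1 < s2) (h23 : s2 < s3) (h34 : s3 < s4)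
    (v1 : 0 < al*s1^2+be*s1+ga) (v2 : al*s2^2+be*s2+ga < 0)
    (v3 : 0 < al*s3^2+be*s3+ga) (v4 : al*s4^2+be*s4+ga < 0) : False := by
  have h13 := h12.trans h23
  have h24 := h23.trans h34
  have h14 := h13.trans h34
  have A1 : (0:ℝ) < (s2-s1)*(s3-s1)*(s4-s1) :=
    mul_pos (mul_pos (sub_pos.2 h12) (sub_pos.2 h13)) (sub_pos.2 h14)
  have A2 : (0:ℝ) < (s2-s1)*(s3-s2)*(s4-s2) :=
    mul_pos (mul_pos (sub_pos.2 h12) (sub_pos.2 h23)) (sub_pos.2 h24)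
  have A3 : (0:ℝ) < (s3-s1)*(s3-s2)*(s4-s3) :=
    mul_pos (mul_pos (sub_pos.2 h13) (sub_pos.2 h23)) (sub_pos.2 h34)
  have A4 : (0:ℝ) < (s4-s1)*(s4-s2)*(s4-s3) :=
    mul_pos (mul_pos (sub_pos.2 h14) (sub_pos.2 h24)) (sub_pos.2 h34)
  have key : (al*s2^2+be*s2+ga)*(((s2-s1)*(s3-s1)*(s4-s1))*(((s3-s1)*(s3-s2)*(s4-s3))*((s4-s1)*(s4-s2)*(s4-s3))))
      + (al*s4^2+be*s4+ga)*(((s2-s1)*(s3-s1)*(s4-s1))*(((s2-s1)*(s3-s2)*(s4-s2))*((s3-s1)*(s3-s2)*(s4-s3))))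
      = (al*s1^2+be*s1+ga)*(((s2-s1)*(s3-s2)*(s4-s2))*(((s3-s1)*(s3-s2)*(s4-s3))*((s4-s1)*(s4-s2)*(s4-s3))))
      + (al*s3^2+be*s3+ga)*(((s2-s1)*(s3-s1)*(s4-s1))*(((s2-s1)*(s3-s2)*(s4-s2))*((s4-s1)*(s4-s2)*(s4-s3)))) := by
    ring
  linarith [mul_pos v1 (mul_pos A2 (mul_pos A3 A4)), mul_pos v3 (mul_pos A1 (mul_pos A2 A4)),
    mul_pos (mul_pos A1 (mul_pos A3 A4)) (neg_pos.2 v2), mul_pos (mul_pos A1 (mul_pos A2 A3)) (neg_pos.2 v4)]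

lemma exists_perm_two {α : Type*} [DecidableEq α] {i j i' j' : α} (h : i ≠ j) (h' : i' ≠ j') :
    ∃ τ : Equiv.Perm α, τ i' = i ∧ τ j' = j := by
  set j'' := Equiv.swap i' i j' with hj''
  have hj''i : j'' ≠ i := by
    rw [hj'']
    intro hc
    have h2 : (Equiv.swap i' i) j' = (Equiv.swap i' i) i' := by
      rw [hc, Equiv.swap_apply_left]
    exact h' ((Equiv.swap i' i).injective h2).symm
  refine ⟨(Equiv.swap i' i).trans (Equiv.swap j'' j), ?_, ?_⟩
  · simp only [Equiv.trans_apply, Equiv.swap_apply_left]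
    exact Equiv.swap_apply_of_ne_of_ne (Ne.symm hj''i) h
  · simp only [Equiv.trans_apply, ← hj'']
    exact Equiv.swap_apply_left j'' j

lemma sum_perm_single {n : ℕ} (hn : 0 < n) (x : Fin n → ℤ) (i : Fin n) :
    ∑ σ : Equiv.Perm (Fin n), (x (σ i) : ℝ) = (n-1).factorial * ∑ u, (x u : ℝ) := by
  have hind : ∀ i' : Fin n, ∑ σ : Equiv.Perm (Fin n), (x (σ i) : ℝ)
      = ∑ σ : Equiv.Perm (Fin n), (x (σ i') : ℝ) := by
    intro i'
    exact Fintype.sum_equiv (Equiv.mulRight (Equiv.swap i i')) _ _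
      (fun σ => by simp [Equiv.Perm.mul_apply])
  have h1 : (n : ℝ) * ∑ σ : Equiv.Perm (Fin n), (x (σ i) : ℝ)
      = ∑ i' : Fin n, ∑ σ : Equiv.Perm (Fin n), (x (σ i') : ℝ) := by
    rw [Finset.sum_congr rfl (fun i' _ => (hind i').symm)]
    simp [mul_comm]
  have h2 : ∑ i' : Fin n, ∑ σ : Equiv.Perm (Fin n), (x (σ i') : ℝ)
      = (n.factorial : ℝ) * ∑ u, (x u : ℝ) := by
    rw [Finset.sum_comm]
    rw [Finset.sum_congr rfl (fun σ _ => Equiv.sum_comp σ (fun u => ((x u : ℝ))))]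
    simp [Fintype.card_perm, mul_comm]
  have hfac : (n:ℝ) * ((n-1).factorial : ℝ) = (n.factorial : ℝ) := by
    rw [← Nat.cast_mul, Nat.mul_factorial_pred hn.ne']
  have hne : (n:ℝ) ≠ 0 := by positivity
  apply mul_left_cancel₀ hne
  rw [h1, h2, ← hfac]
  ring

lemma sum_perm_pair {n : ℕ} (hn : 2 ≤ n) (x : Fin n → ℤ) (hx : x ∈ cube (Fin n))
    {i j : Fin n} (hij : i ≠ j) :
    ∑ σ : Equiv.Perm (Fin n), (x (σ i) : ℝ) * (x (σ j) : ℝ)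
      = (n-2).factorial * ((∑ u, (x u : ℝ))^2 - n) := by
  have hsq : ∀ u, (x u : ℝ)^2 = 1 := by
    intro u
    rcases (mem_cube.mp hx) u with h|h <;> rw [h] <;> norm_num
  have hind : ∀ i' j' : Fin n, i' ≠ j' → ∑ σ : Equiv.Perm (Fin n), (x (σ i) : ℝ) * (x (σ j) : ℝ)
      = ∑ σ : Equiv.Perm (Fin n), (x (σ i') : ℝ) * (x (σ j') : ℝ) := by
    intro i' j' hij'
    obtain ⟨τ, hτi, hτj⟩ := exists_perm_two hij hij'
    exact Fintype.sum_equiv (Equiv.mulRight τ) _ _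
      (fun σ => by simp [Equiv.Perm.mul_apply, hτi, hτj])
  have key : ∑ i' : Fin n, ∑ j' ∈ univ.erase i', ∑ σ : Equiv.Perm (Fin n),
      (x (σ i') : ℝ) * (x (σ j') : ℝ)
      = ((n:ℝ) * ((n:ℝ)-1)) * ∑ σ : Equiv.Perm (Fin n), (x (σ i) : ℝ) * (x (σ j) : ℝ) := by
    have h0 : ∀ i' : Fin n, ∀ j' ∈ univ.erase i', ∑ σ : Equiv.Perm (Fin n),
        (x (σ i') : ℝ) * (x (σ j') : ℝ)
        = ∑ σ : Equiv.Perm (Fin n), (x (σ i) : ℝ) * (x (σ j) : ℝ) := by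
      intro i' j' hj'
      exact (hind i' j' (Ne.symm (Finset.ne_of_mem_erase hj'))).symm
    rw [Finset.sum_congr rfl (fun i' _ => Finset.sum_congr rfl (h0 i'))]
    have hcard : ∀ i' : Fin n, (univ.erase i').card = n - 1 := by
      intro i'; rw [Finset.card_erase_of_mem (mem_univ i')]; simp
    simp only [Finset.sum_const, hcard, nsmul_eq_mul, Finset.card_univ, Fintype.card_fin]
    have h1 : ((n-1 : ℕ) : ℝ) = (n:ℝ) - 1 := by
      have : 1 ≤ n := le_trans one_le_two hn
      push_cast [Nat.cast_sub this]; ring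
    rw [h1]; ring
  have inner1 : ∀ σ : Equiv.Perm (Fin n), ∀ i' : Fin n,
      ∑ j' ∈ univ.erase i', (x (σ i') : ℝ) * (x (σ j') : ℝ)
      = (x (σ i') : ℝ) * (∑ u, (x u : ℝ)) - 1 := by
    intro σ i'
    rw [Finset.sum_erase_eq_sub (mem_univ i'), ← Finset.mul_sum,
      Equiv.sum_comp σ (fun u => ((x u : ℝ)))]
    rw [← sq, hsq]
  have key2 : ∑ i' : Fin n, ∑ j' ∈ univ.erase i', ∑ σ : Equiv.Perm (Fin n),
      (x (σ i') : ℝ) * (x (σ j') : ℝ)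
      = (n.factorial : ℝ) * ((∑ u, (x u : ℝ))^2 - n) := by
    rw [Finset.sum_congr rfl (fun i' _ => Finset.sum_comm (s := univ.erase i')
      (t := (univ : Finset (Equiv.Perm (Fin n)))) (f := fun j' σ => (x (σ i') : ℝ) * (x (σ j') : ℝ)))]
    rw [Finset.sum_comm]
    have hσ : ∀ σ : Equiv.Perm (Fin n), ∑ i' : Fin n, ∑ j' ∈ univ.erase i',
        (x (σ i') : ℝ) * (x (σ j') : ℝ) = (∑ u, (x u : ℝ))^2 - n := by
      intro σ
      rw [Finset.sum_congr rfl (fun i' _ => inner1 σ i')]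
      rw [Finset.sum_sub_distrib, ← Finset.sum_mul,
        Equiv.sum_comp σ (fun u => ((x u : ℝ)))]
      simp [sq, Finset.card_univ]
    rw [Finset.sum_congr rfl (fun σ _ => hσ σ)]
    simp [Fintype.card_perm, mul_comm]
    ring
  have hfac : ((n:ℝ) * ((n:ℝ)-1)) * ((n-2).factorial : ℝ) = (n.factorial : ℝ) := by
    have h1 : 1 ≤ n := le_trans one_le_two hn
    have h2 : 0 < n - 1 := by omega
    have e1 : (n-1) * (n-1-1).factorial = (n-1).factorial := Nat.mul_factorial_pred h2.ne'
    have e2 : n * (n-1).factorial = n.factorial := Nat.mul_factorial_pred (by omega)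
    have : ((n:ℝ)-1) = ((n-1:ℕ):ℝ) := by push_cast [Nat.cast_sub h1]; ring
    rw [this, ← Nat.cast_mul, ← Nat.cast_mul]
    norm_cast
    have : n - 1 - 1 = n - 2 := by omega
    rw [← this, mul_assoc, e1, e2]
  have hne : ((n:ℝ) * ((n:ℝ)-1)) ≠ 0 := by
    have h1 : (1:ℝ) < (n:ℝ) := by exact_mod_cast lt_of_lt_of_le one_lt_two hn
    have : (0:ℝ) < (n:ℝ) - 1 := by linarith
    positivity
  apply mul_left_cancel₀ hne
  rw [key.symm, key2, ← hfac]
  ring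

lemma sum_perm_quadPoly {n : ℕ} (hn : 2 ≤ n) (a : Fin n → Fin n → ℝ) (b : Fin n → ℝ) (c : ℝ)
    (x : Fin n → ℤ) (hx : x ∈ cube (Fin n)) :
    ∑ σ : Equiv.Perm (Fin n), quadPoly a b c (x ∘ σ)
      = ((n-2).factorial * (∑ i, ∑ j, if i < j then a i j else 0)) * ((∑ u, (x u:ℝ))^2 - n)
        + ((n-1).factorial * (∑ i, b i)) * (∑ u, (x u:ℝ)) + n.factorial * c := by
  simp only [quadPoly, Function.comp_apply]
  rw [Finset.sum_add_distrib, Finset.sum_add_distrib]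
  congr 1
  · congr 1
    · -- quadratic part
      rw [Finset.sum_comm]
      rw [Finset.sum_congr rfl (fun i _ => Finset.sum_comm (s := (univ : Finset (Equiv.Perm (Fin n))))
        (t := univ) (f := fun σ j => if i < j then a i j * (x (σ i):ℝ) * (x (σ j):ℝ) else 0))]
      have hterm : ∀ i j : Fin n, (∑ σ : Equiv.Perm (Fin n),
          if i < j then a i j * (x (σ i):ℝ) * (x (σ j):ℝ) else 0)
          = (if i < j then a i j else 0) * ((n-2).factorial * ((∑ u, (x u:ℝ))^2 - n)) := by
        intro i j
        by_cases h : i < j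
        · simp only [if_pos h]
          have : ∀ σ : Equiv.Perm (Fin n), a i j * (x (σ i):ℝ) * (x (σ j):ℝ)
              = a i j * ((x (σ i):ℝ) * (x (σ j):ℝ)) := fun σ => by ring
          rw [Finset.sum_congr rfl (fun σ _ => this σ), ← Finset.mul_sum,
            sum_perm_pair hn x hx (ne_of_lt h)]
        · simp [h]
      rw [Finset.sum_congr rfl (fun i _ => Finset.sum_congr rfl (fun j _ => hterm i j))]
      simp only [← Finset.sum_mul]
      ring
    · -- linear part
      rw [Finset.sum_comm]
      have hterm : ∀ i : Fin n, (∑ σ : Equiv.Perm (Fin n), b i * (x (σ i):ℝ))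
          = b i * ((n-1).factorial * ∑ u, (x u:ℝ)) := by
        intro i
        rw [← Finset.mul_sum, sum_perm_single (by omega) x i]
      rw [Finset.sum_congr rfl (fun i _ => hterm i), ← Finset.sum_mul]
      ring
  · simp [Finset.card_univ, Fintype.card_perm, mul_comm]

lemma g_const_between (g : ℕ → ℤ) : ∀ u v : ℕ, u ≤ v →
    (∀ w, u ≤ w → w < v → g w = g (w+1)) → g u = g v := by
  intro u v huv
  induction v, huv using Nat.le_induction with
  | base => intro _; rfl
  | succ v huv ih =>
    intro h
    rw [ih (fun w hw hw' => h w hw (by omega)), h v huv (by omega)]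

lemma card_changes_le_two {n : ℕ} (g : ℕ → ℤ) (al be ga : ℝ)
    (hsign : ∀ k, k ≤ n → (0 < al*(2*(k:ℝ)-n)^2+be*(2*(k:ℝ)-n)+ga ∧ g k = 1) ∨
                      (al*(2*(k:ℝ)-n)^2+be*(2*(k:ℝ)-n)+ga < 0 ∧ g k = -1)) :
    ((Finset.range n).filter fun k => g k ≠ g (k+1)).card ≤ 2 := by
  classical
  set Qv : ℕ → ℝ := fun k => al*(2*(k:ℝ)-n)^2+be*(2*(k:ℝ)-n)+ga with hQv
  have hval : ∀ k, k ≤ n → g k = 1 ∨ g k = -1 := by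
    intro k hk
    rcases hsign k hk with ⟨_, h⟩|⟨_, h⟩
    · exact Or.inl h
    · exact Or.inr h
  have hpos : ∀ k, k ≤ n → g k = 1 → 0 < Qv k := by
    intro k hk h1
    rcases hsign k hk with ⟨h, _⟩|⟨_, hg⟩
    · exact h
    · rw [hg] at h1; omega
  have hneg : ∀ k, k ≤ n → g k = -1 → Qv k < 0 := by
    intro k hk h1
    rcases hsign k hk with ⟨_, hg⟩|⟨h, _⟩
    · rw [hg] at h1; omega
    · exact h
  by_contra hcon
  push_neg at hcon
  set D := (Finset.range n).filter fun k => g k ≠ g (k+1) with hD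
  have hsub : D ⊆ Finset.range n := Finset.filter_subset _ _
  have hne1 : D.Nonempty := Finset.card_pos.mp (by omega)
  set k1 := D.min' hne1 with hk1
  have hk1D : k1 ∈ D := D.min'_mem hne1
  have hne2 : (D.erase k1).Nonempty := by
    apply Finset.card_pos.mp
    rw [Finset.card_erase_of_mem hk1D]
    omega
  set k2 := (D.erase k1).min' hne2 with hk2
  have hk2D' : k2 ∈ D.erase k1 := (D.erase k1).min'_mem hne2
  have hk2D : k2 ∈ D := Finset.mem_of_mem_erase hk2D'
  have hne3 : ((D.erase k1).erase k2).Nonempty := by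
    apply Finset.card_pos.mp
    rw [Finset.card_erase_of_mem hk2D', Finset.card_erase_of_mem hk1D]
    omega
  set k3 := ((D.erase k1).erase k2).min' hne3 with hk3
  have hk3D'' : k3 ∈ (D.erase k1).erase k2 := ((D.erase k1).erase k2).min'_mem hne3
  have hk3D : k3 ∈ D := Finset.mem_of_mem_erase (Finset.mem_of_mem_erase hk3D'')
  have h12 : k1 < k2 :=
    lt_of_le_of_ne (D.min'_le k2 hk2D) (Ne.symm (Finset.ne_of_mem_erase hk2D'))
  have h23 : k2 < k3 := by
    have hle : k2 ≤ k3 := (D.erase k1).min'_le k3 (Finset.mem_of_mem_erase hk3D'')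
    exact lt_of_le_of_ne hle (Ne.symm (Finset.ne_of_mem_erase hk3D''))
  have hk1n : k1 < n := Finset.mem_range.mp (hsub hk1D)
  have hk2n : k2 < n := Finset.mem_range.mp (hsub hk2D)
  have hk3n : k3 < n := Finset.mem_range.mp (hsub hk3D)
  -- no change points strictly between
  have gap12 : ∀ w, k1 + 1 ≤ w → w < k2 → g w = g (w+1) := by
    intro w hw hw'
    by_contra hne
    have hwD : w ∈ D := Finset.mem_filter.mpr ⟨Finset.mem_range.mpr (by omega), hne⟩
    have : k2 ≤ w := (D.erase k1).min'_le w (Finset.mem_erase.mpr ⟨by omega, hwD⟩)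
    omega
  have gap23 : ∀ w, k2 + 1 ≤ w → w < k3 → g w = g (w+1) := by
    intro w hw hw'
    by_contra hne
    have hwD : w ∈ D := Finset.mem_filter.mpr ⟨Finset.mem_range.mpr (by omega), hne⟩
    have : k3 ≤ w := ((D.erase k1).erase k2).min'_le w
      (Finset.mem_erase.mpr ⟨by omega, Finset.mem_erase.mpr ⟨by omega, hwD⟩⟩)
    omega
  have hc12 : g (k1+1) = g k2 := g_const_between g (k1+1) k2 h12 gap12
  have hc23 : g (k2+1) = g k3 := g_const_between g (k2+1) k3 h23 gap23
  have hch1 : g k1 ≠ g (k1+1) := (Finset.mem_filter.mp hk1D).2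
  have hch2 : g k2 ≠ g (k2+1) := (Finset.mem_filter.mp hk2D).2
  have hch3 : g k3 ≠ g (k3+1) := (Finset.mem_filter.mp hk3D).2
  -- strictly increasing s-values
  have hs12 : 2*(k1:ℝ)-n < 2*(k2:ℝ)-n := by
    have : (k1:ℝ) < k2 := by exact_mod_cast h12
    linarith
  have hs23 : 2*(k2:ℝ)-n < 2*(k3:ℝ)-n := by
    have : (k2:ℝ) < k3 := by exact_mod_cast h23
    linarith
  have hs34 : 2*(k3:ℝ)-n < 2*((k3+1:ℕ):ℝ)-n := by
    push_cast
    linarith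
  have hg1 := hval k1 (by omega)
  rcases hg1 with he|he
  · -- g k1 = 1
    have e2 : g k2 = -1 := by
      rw [← hc12]
      rcases hval (k1+1) (by omega) with h|h
      · rw [he, h] at hch1; omega
      · exact h
    have e3 : g k3 = 1 := by
      rw [← hc23]
      rcases hval (k2+1) (by omega) with h|h
      · exact h
      · rw [e2, h] at hch2; omega
    have e4 : g (k3+1) = -1 := by
      rcases hval (k3+1) (by omega) with h|h
      · rw [e3, h] at hch3; omega
      · exact h
    exact quad_no_alt hs12 hs23 hs34 (hpos k1 (by omega) he) (hneg k2 (by omega) e2)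
      (hpos k3 (by omega) e3) (hneg (k3+1) (by omega) e4)
  · -- g k1 = -1 : apply to negated polynomial
    have e2 : g k2 = 1 := by
      rw [← hc12]
      rcases hval (k1+1) (by omega) with h|h
      · exact h
      · rw [he, h] at hch1; omega
    have e3 : g k3 = -1 := by
      rw [← hc23]
      rcases hval (k2+1) (by omega) with h|h
      · rw [e2, h] at hch2; omega
      · exact h
    have e4 : g (k3+1) = 1 := by
      rcases hval (k3+1) (by omega) with h|h
      · exact h
      · rw [e3, h] at hch3; omega
    have n1 := hneg k1 (by omega) he
    have p2 := hpos k2 (by omega) e2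
    have n3 := hneg k3 (by omega) e3
    have p4 := hpos (k3+1) (by omega) e4
    exact quad_no_alt (al := -al) (be := -be) (ga := -ga) hs12 hs23 hs34
      (by simp only [hQv] at n1 ⊢; linarith) (by simp only [hQv] at p2 ⊢; linarith)
      (by simp only [hQv] at n3 ⊢; linarith) (by simp only [hQv] at p4 ⊢; linarith)

lemma choose_mono_half {m : ℕ} : ∀ a b : ℕ, a ≤ b → b ≤ m / 2 → m.choose a ≤ m.choose b := by
  intro a b hab
  induction b, hab using Nat.le_induction with
  | base => intro _; exact le_refl _
  | succ b hab ih =>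
    intro hb
    exact le_trans (ih (by omega)) (Nat.choose_le_succ_of_lt_half_left (by omega))

lemma choose_second_max {t k : ℕ} (ht : 1 ≤ t) (hk : k ≤ 2*t) (hne : k ≠ t) :
    (2*t).choose k ≤ (2*t).choose (t-1) := by
  rcases Nat.lt_or_ge k t with h|h
  · exact choose_mono_half k (t-1) (by omega) (by omega)
  · rw [← Nat.choose_symm hk]
    exact choose_mono_half (2*t - k) (t-1) (by omega) (by omega)

lemma sum_D_odd {n : ℕ} (hn : 3 ≤ n) (hodd : Odd n) (D : Finset ℕ) (hsub : D ⊆ Finset.range n)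
    (hcard : D.card ≤ 2) :
    ∑ k ∈ D, (n-1).choose k ≤ n.choose ((n-1)/2) := by
  obtain ⟨t, ht⟩ := hodd
  have ht1 : 1 ≤ t := by omega
  have hn1 : n - 1 = 2*t := by omega
  have hh : (n-1)/2 = t := by omega
  rw [hh, hn1]
  have hpascal : n.choose t = (2*t).choose (t-1) + (2*t).choose t := by
    have h1 := Nat.choose_succ_succ' (2*t) (t-1)
    have h2 : t - 1 + 1 = t := by omega
    rw [h2] at h1
    have h3 : n = 2*t+1 := by omega
    rw [h3]
    exact h1
  have hmid : ∀ k, (2*t).choose k ≤ (2*t).choose t := by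
    intro k
    have := Nat.choose_le_middle k (2*t)
    have h2 : 2*t/2 = t := by omega
    rwa [h2] at this
  have hmem : ∀ k ∈ D, k ≤ 2*t := by
    intro k hk
    have := Finset.mem_range.mp (hsub hk)
    omega
  have h0 : D.card = 0 ∨ D.card = 1 ∨ D.card = 2 := by omega
  rcases h0 with h|h|h
  · rw [Finset.card_eq_zero] at h
    simp [h]
  · obtain ⟨a, ha⟩ := Finset.card_eq_one.mp h
    rw [ha, Finset.sum_singleton]
    calc (2*t).choose a ≤ (2*t).choose t := hmid a
    _ ≤ n.choose t := by omega
  · obtain ⟨a, b, hab, hD⟩ := Finset.card_eq_two.mp h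
    rw [hD, Finset.sum_pair hab]
    have haD : a ∈ D := by rw [hD]; simp
    have hbD : b ∈ D := by rw [hD]; simp
    have ha2 := hmem a haD
    have hb2 := hmem b hbD
    by_cases hat : a = t
    · have hbt : b ≠ t := by omega
      have := choose_second_max ht1 hb2 hbt
      have := hmid a
      omega
    · have h1 := choose_second_max ht1 ha2 hat
      have h2 := hmid b
      omega

lemma sum_D_even {n : ℕ} (hn : 3 ≤ n) (heven : Even n) (D : Finset ℕ)
    (hsub : D ⊆ Finset.range n) (hcard : D.card ≤ 2) :
    2 * (∑ k ∈ D, (n-1).choose k) ≤ 2 * n.choose ((n-2)/2) + n.choose (n/2) := by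
  obtain ⟨m', hm'⟩ := heven
  set m := m' - 1 with hm
  have hn2 : n = 2*m+2 := by omega
  have hm1 : 1 ≤ m := by omega
  have e1 : n - 1 = 2*m+1 := by omega
  have e2 : (n-2)/2 = m := by omega
  have e3 : n/2 = m+1 := by omega
  rw [e1, e2, e3]
  have hmax : ∀ k ∈ D, (2*m+1).choose k ≤ (2*m+1).choose m := by
    intro k _
    have := Nat.choose_le_middle k (2*m+1)
    have h2 : (2*m+1)/2 = m := by omega
    rwa [h2] at this
  have hsum : ∑ k ∈ D, (2*m+1).choose k ≤ 2 * (2*m+1).choose m := by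
    calc ∑ k ∈ D, (2*m+1).choose k ≤ D.card • (2*m+1).choose m :=
      Finset.sum_le_card_nsmul D _ _ hmax
    _ = D.card * (2*m+1).choose m := by rw [smul_eq_mul]
    _ ≤ 2 * (2*m+1).choose m := Nat.mul_le_mul_right _ hcard
  have hpascal : n.choose (m+1) = (2*m+1).choose m + (2*m+1).choose (m+1) := by
    rw [hn2]
    exact Nat.choose_succ_succ' (2*m+1) m
  have hsymm : (2*m+1).choose (m+1) = (2*m+1).choose m := by
    have h4 : 2*m+1 - m = m+1 := by omega
    rw [← h4]
    exact Nat.choose_symm (by omega)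
  have hmono : (2*m+1).choose m ≤ n.choose m := by
    rw [hn2]
    exact Nat.choose_le_choose m (by omega)
  omega

lemma cnt_le {n : ℕ} (x : Fin n → ℤ) : cnt x ≤ n := by
  calc cnt x ≤ (univ : Finset (Fin n)).card := Finset.card_filter_le _ _
  _ = n := by simp

lemma flipAt_mem_cube {V : Type*} [Fintype V] [DecidableEq V] {x : V → ℤ}
    (hx : x ∈ cube V) (i : V) : flipAt x i ∈ cube V := by
  rw [mem_cube] at hx ⊢
  intro j
  by_cases h : j = i
  · subst h
    simp only [flipAt, Function.update_self]
    rcases hx j with h'|h' <;> rw [h'] <;> norm_num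
  · simp only [flipAt, Function.update_of_ne h]
    exact hx j

lemma filter_flipAt_pos {n : ℕ} {x : Fin n → ℤ} (i : Fin n) (hi : x i = 1) :
    (univ.filter fun j => flipAt x i j = 1) = (univ.filter fun j => x j = 1).erase i := by
  ext j
  by_cases h : j = i
  · subst h
    simp [flipAt, Function.update_self, hi]
  · simp [flipAt, Function.update_apply, h]

lemma filter_flipAt_neg {n : ℕ} {x : Fin n → ℤ} (hx : x ∈ cube (Fin n)) (i : Fin n)
    (hi : x i = -1) :
    (univ.filter fun j => flipAt x i j = 1) = insert i (univ.filter fun j => x j = 1) := by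
  ext j
  by_cases h : j = i
  · subst h
    simp [flipAt, Function.update_self, hi]
  · simp [flipAt, Function.update_apply, h]

lemma cnt_flipAt_pos {n : ℕ} {x : Fin n → ℤ} (i : Fin n) (hi : x i = 1) :
    cnt (flipAt x i) + 1 = cnt x := by
  have hmem : i ∈ univ.filter fun j => x j = 1 := by simp [hi]
  rw [cnt, filter_flipAt_pos i hi, Finset.card_erase_of_mem hmem, cnt]
  have : 1 ≤ (univ.filter fun j => x j = 1).card := Finset.card_pos.mpr ⟨i, hmem⟩
  omega

lemma cnt_flipAt_neg {n : ℕ} {x : Fin n → ℤ} (hx : x ∈ cube (Fin n)) (i : Fin n)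
    (hi : x i = -1) : cnt (flipAt x i) = cnt x + 1 := by
  have hmem : i ∉ univ.filter fun j => x j = 1 := by simp [hi]
  rw [cnt, filter_flipAt_neg hx i hi, Finset.card_insert_of_notMem hmem, cnt]

lemma card_cnt_eq {n k : ℕ} :
    ((cube (Fin n)).filter fun x => cnt x = k).card = n.choose k := by
  classical
  have h1 : ((cube (Fin n)).filter fun x => cnt x = k).card
      = (Finset.powersetCard k (univ : Finset (Fin n))).card := by
    apply Finset.card_bij' (i := fun x _ => univ.filter fun i => x i = 1)
      (j := fun S _ => fun i => if i ∈ S then (1:ℤ) else -1)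
    · intro x hx
      rw [Finset.mem_filter] at hx
      have := mem_cube.mp hx.1
      funext i
      by_cases h : x i = 1 <;> simp only [Finset.mem_filter, Finset.mem_univ, true_and]
      · simp [h]
      · rcases this i with h'|h'
        · simp [h, h']
        · exact absurd h' h
    · intro S hS
      ext i
      by_cases h : i ∈ S <;> simp [h]
    · intro x hx
      rw [Finset.mem_filter] at hx
      rw [Finset.mem_powersetCard]
      exact ⟨Finset.subset_univ _, hx.2⟩
    · intro S hS
      rw [Finset.mem_powersetCard] at hS
      rw [Finset.mem_filter]
      constructor
      · rw [mem_cube]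
        intro i
        by_cases h : i ∈ S <;> simp [h]
      · rw [cnt, ← hS.2]
        congr 1
        ext i
        by_cases h : i ∈ S <;> simp [h]
  rw [h1, Finset.card_powersetCard]
  simp

lemma totalInf_eq {n : ℕ} (hn : 1 ≤ n) (f : (Fin n → ℤ) → ℤ) (g : ℕ → ℤ)
    (hfg : ∀ x ∈ cube (Fin n), f x = g (cnt x)) :
    totalInf f = (∑ k ∈ Finset.range n,
      (if g k ≠ g (k+1) then (1:ℝ) else 0) * (2 * n * ((n-1).choose k))) / 2 ^ n := by
  classical
  have hcard : (((cube (Fin n)).card : ℕ) : ℝ) = 2 ^ n := by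
    rw [card_cube]; simp
  have step1 : totalInf f = (∑ x ∈ cube (Fin n), ∑ i : Fin n,
      if f x ≠ f (flipAt x i) then (1:ℝ) else 0) / 2 ^ n := by
    rw [totalInf]
    simp only [coordInf, hcard]
    rw [← Finset.sum_div, Finset.sum_comm]
    congr 1
    apply Finset.sum_congr rfl
    intro y _
    apply Finset.sum_congr rfl
    intro i _
    congr 1
  have step2 : ∀ x ∈ cube (Fin n), (∑ i : Fin n, if f x ≠ f (flipAt x i) then (1:ℝ) else 0)
      = (cnt x) * (if g (cnt x) ≠ g (cnt x - 1) then (1:ℝ) else 0)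
        + ((n : ℝ) - cnt x) * (if g (cnt x) ≠ g (cnt x + 1) then (1:ℝ) else 0) := by
    intro x hx
    rw [← Finset.sum_filter_add_sum_filter_not univ (fun i => x i = 1)]
    congr 1
    · have h0 : ∀ i ∈ univ.filter (fun i => x i = 1),
          (if f x ≠ f (flipAt x i) then (1:ℝ) else 0)
          = (if g (cnt x) ≠ g (cnt x - 1) then (1:ℝ) else 0) := by
        intro i hi
        rw [Finset.mem_filter] at hi
        rw [hfg x hx, hfg _ (flipAt_mem_cube hx i)]
        have h1 := cnt_flipAt_pos i hi.2
        have h2 : cnt (flipAt x i) = cnt x - 1 := by omega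
        rw [h2]
      rw [Finset.sum_congr rfl h0, Finset.sum_const, nsmul_eq_mul, cnt]
    · have h0 : ∀ i ∈ univ.filter (fun i => ¬ x i = 1),
          (if f x ≠ f (flipAt x i) then (1:ℝ) else 0)
          = (if g (cnt x) ≠ g (cnt x + 1) then (1:ℝ) else 0) := by
        intro i hi
        rw [Finset.mem_filter] at hi
        have hneg : x i = -1 := by
          rcases (mem_cube.mp hx) i with h'|h'
          · exact h'
          · exact absurd h' hi.2
        rw [hfg x hx, hfg _ (flipAt_mem_cube hx i), cnt_flipAt_neg hx i hneg]
      rw [Finset.sum_congr rfl h0, Finset.sum_const, nsmul_eq_mul]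
      congr 1
      have h3 := Finset.card_filter_add_card_filter_not
        (s := (univ : Finset (Fin n))) (p := fun i => x i = 1)
      simp only [Finset.card_univ, Fintype.card_fin] at h3
      have h4 : (univ.filter (fun i => ¬ x i = 1)).card = n - cnt x := by
        rw [cnt] at *; omega
      rw [h4]
      have h5 := cnt_le x
      push_cast [Nat.cast_sub h5]
      ring
  have step3 : (∑ x ∈ cube (Fin n), ((cnt x : ℝ) * (if g (cnt x) ≠ g (cnt x - 1) then (1:ℝ) else 0)
        + ((n : ℝ) - cnt x) * (if g (cnt x) ≠ g (cnt x + 1) then (1:ℝ) else 0)))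
      = ∑ k ∈ Finset.range (n+1), (n.choose k : ℝ) * ((k : ℝ) * (if g k ≠ g (k - 1) then (1:ℝ) else 0)
        + ((n : ℝ) - k) * (if g k ≠ g (k + 1) then (1:ℝ) else 0)) := by
    rw [← Finset.sum_fiberwise_of_maps_to (g := cnt) (t := Finset.range (n+1))
      (fun x _ => Finset.mem_range.mpr (Nat.lt_succ_of_le (cnt_le x)))]
    apply Finset.sum_congr rfl
    intro k _
    have h0 : ∀ x ∈ (cube (Fin n)).filter (fun x => cnt x = k),
        ((cnt x : ℝ) * (if g (cnt x) ≠ g (cnt x - 1) then (1:ℝ) else 0)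
        + ((n : ℝ) - cnt x) * (if g (cnt x) ≠ g (cnt x + 1) then (1:ℝ) else 0))
        = ((k : ℝ) * (if g k ≠ g (k - 1) then (1:ℝ) else 0)
        + ((n : ℝ) - k) * (if g k ≠ g (k + 1) then (1:ℝ) else 0)) := by
      intro x hx
      rw [Finset.mem_filter] at hx
      rw [hx.2]
    rw [Finset.sum_congr rfl h0, Finset.sum_const, nsmul_eq_mul, card_cnt_eq]
  -- step 4: rearrange the index
  have cast1 : ∀ k, k < n → ((n.choose (k+1) : ℝ)) * ((k:ℝ)+1) = (n:ℝ) * ((n-1).choose k) := by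
    intro k hk
    have h1 : (n-1).succ * ((n-1).choose k) = ((n-1).succ).choose (k+1) * (k+1) :=
      Nat.add_one_mul_choose_eq (n-1) k
    have h2 : (n-1).succ = n := by omega
    rw [h2] at h1
    exact_mod_cast h1.symm
  have cast2 : ∀ k, k < n → ((n.choose k : ℝ)) * ((n:ℝ)-(k:ℝ)) = (n:ℝ) * ((n-1).choose k) := by
    intro k hk
    have h1 : n.choose (k+1) * (k+1) = n.choose k * (n - k) := Nat.choose_succ_right_eq n k
    have h2 : ((n - k : ℕ) : ℝ) = (n:ℝ) - (k:ℝ) := by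
      push_cast [Nat.cast_sub (le_of_lt hk)]; ring
    rw [← h2, ← Nat.cast_mul, ← h1]
    exact_mod_cast cast1 k hk
  have step4 : ∑ k ∈ Finset.range (n+1), (n.choose k : ℝ) * ((k : ℝ) * (if g k ≠ g (k - 1) then (1:ℝ) else 0)
        + ((n : ℝ) - k) * (if g k ≠ g (k + 1) then (1:ℝ) else 0))
      = ∑ k ∈ Finset.range n,
        (if g k ≠ g (k+1) then (1:ℝ) else 0) * (2 * n * ((n-1).choose k)) := by
    have split : ∀ k ∈ Finset.range (n+1), (n.choose k : ℝ) * ((k : ℝ) * (if g k ≠ g (k - 1) then (1:ℝ) else 0)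
        + ((n : ℝ) - k) * (if g k ≠ g (k + 1) then (1:ℝ) else 0))
        = (n.choose k : ℝ) * (k : ℝ) * (if g k ≠ g (k - 1) then (1:ℝ) else 0)
        + (n.choose k : ℝ) * ((n : ℝ) - k) * (if g k ≠ g (k + 1) then (1:ℝ) else 0) := by
      intro k _; ring
    rw [Finset.sum_congr rfl split, Finset.sum_add_distrib]
    have sA : ∑ k ∈ Finset.range (n+1), (n.choose k : ℝ) * (k : ℝ) * (if g k ≠ g (k - 1) then (1:ℝ) else 0)
        = ∑ k ∈ Finset.range n, (if g k ≠ g (k+1) then (1:ℝ) else 0) * ((n:ℝ) * ((n-1).choose k)) := by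
      rw [Finset.sum_range_succ']
      simp only [Nat.cast_zero, mul_zero, zero_mul, add_zero]
      apply Finset.sum_congr rfl
      intro k hk
      have hk' := Finset.mem_range.mp hk
      have e1 : (k + 1) - 1 = k := by omega
      rw [e1]
      have e2 : (if g (k+1) ≠ g k then (1:ℝ) else 0) = (if g k ≠ g (k+1) then (1:ℝ) else 0) := by
        congr 1
        simp [ne_comm]
      rw [e2]
      push_cast
      rw [(by ring : (n.choose (k+1) : ℝ) * ((k:ℝ)+1) * (if g k ≠ g (k+1) then (1:ℝ) else 0)
        = ((n.choose (k+1) : ℝ) * ((k:ℝ)+1)) * (if g k ≠ g (k+1) then (1:ℝ) else 0)), cast1 k hk']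
      ring
    have sB : ∑ k ∈ Finset.range (n+1), (n.choose k : ℝ) * ((n:ℝ) - k) * (if g k ≠ g (k + 1) then (1:ℝ) else 0)
        = ∑ k ∈ Finset.range n, (if g k ≠ g (k+1) then (1:ℝ) else 0) * ((n:ℝ) * ((n-1).choose k)) := by
      rw [Finset.sum_range_succ]
      simp only [sub_self, mul_zero, zero_mul, add_zero]
      apply Finset.sum_congr rfl
      intro k hk
      have hk' := Finset.mem_range.mp hk
      rw [(by ring : (n.choose k : ℝ) * ((n:ℝ)-(k:ℝ)) * (if g k ≠ g (k+1) then (1:ℝ) else 0)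
        = ((n.choose k : ℝ) * ((n:ℝ)-(k:ℝ))) * (if g k ≠ g (k+1) then (1:ℝ) else 0)), cast2 k hk']
      ring
    rw [sA, sB, ← Finset.sum_add_distrib]
    apply Finset.sum_congr rfl
    intro k _
    ring
  rw [step1, Finset.sum_congr rfl step2, step3, step4]


lemma comp_perm_mem_cube {n : ℕ} {x : Fin n → ℤ} (hx : x ∈ cube (Fin n))
    (σ : Equiv.Perm (Fin n)) : x ∘ σ ∈ cube (Fin n) :=
  mem_cube.mpr fun i => (mem_cube.mp hx) (σ i)

lemma sgn_cases {t : ℝ} (h : t ≠ 0) : (sgn t = 1 ∧ 0 < t) ∨ (sgn t = -1 ∧ t < 0) := by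
  rcases lt_trichotomy t 0 with h'|h'|h'
  · right
    refine ⟨?_, h'⟩
    rw [sgn, if_neg (not_lt.mpr (le_of_lt h')), if_pos h']
  · exact absurd h' h
  · left
    refine ⟨?_, h'⟩
    rw [sgn, if_pos h']

lemma sum_coords {n : ℕ} {x : Fin n → ℤ} (hx : x ∈ cube (Fin n)) :
    ∑ u, (x u : ℝ) = 2 * (cnt x : ℝ) - n := by
  rw [← Finset.sum_filter_add_sum_filter_not univ (fun i => x i = 1)]
  have h1 : ∀ i ∈ univ.filter (fun i => x i = 1), ((x i : ℝ)) = 1 := by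
    intro i hi
    rw [Finset.mem_filter] at hi
    exact_mod_cast congrArg (fun z : ℤ => (z : ℝ)) hi.2
  have h2 : ∀ i ∈ univ.filter (fun i => ¬ x i = 1), ((x i : ℝ)) = -1 := by
    intro i hi
    rw [Finset.mem_filter] at hi
    rcases (mem_cube.mp hx) i with h'|h'
    · rw [h']; norm_num
    · exact absurd h' hi.2
  rw [Finset.sum_congr rfl h1, Finset.sum_congr rfl h2, Finset.sum_const, Finset.sum_const]
  have h3 := Finset.card_filter_add_card_filter_not
    (s := (univ : Finset (Fin n))) (p := fun i => x i = 1)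
  simp only [Finset.card_univ, Fintype.card_fin] at h3
  have h4 : (univ.filter (fun i => ¬ x i = 1)).card = n - cnt x := by
    rw [cnt] at *
    omega
  rw [h4]
  have h5 : (univ.filter (fun i => x i = 1)).card ≤ n := cnt_le x
  rw [cnt]
  simp only [nsmul_eq_mul, mul_one, mul_neg_one]
  rw [Nat.cast_sub h5]
  push_cast
  ring

def canon (n k : ℕ) : Fin n → ℤ := fun i => if (i : ℕ) < k then 1 else -1

lemma canon_mem_cube {n k : ℕ} : canon n k ∈ cube (Fin n) := by
  rw [mem_cube]
  intro i
  rw [canon]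
  split
  · exact Or.inr rfl
  · exact Or.inl rfl

lemma cnt_canon {n k : ℕ} (hk : k ≤ n) : cnt (canon n k) = k := by
  rw [cnt]
  have h1 : (univ.filter fun i : Fin n => canon n k i = 1)
      = univ.filter fun i : Fin n => (i : ℕ) < k := by
    apply Finset.filter_congr
    intro i _
    rw [canon]
    constructor
    · intro h
      by_contra h'
      rw [if_neg h'] at h
      exact absurd h (by norm_num)
    · intro h
      rw [if_pos h]
  have h2 : (univ.filter fun i : Fin n => (i:ℕ) < k).card = (Finset.range k).card := by
    refine Finset.card_bij' (fun (a : Fin n) _ => (a : ℕ))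
      (fun (m : ℕ) (hm : m ∈ Finset.range k) => (⟨m, lt_of_lt_of_le (Finset.mem_range.mp hm) hk⟩ : Fin n)) ?_ ?_ ?_ ?_
    · intro a ha
      rw [Finset.mem_filter] at ha
      exact Finset.mem_range.mpr ha.2
    · intro m hm
      rw [Finset.mem_filter]
      exact ⟨Finset.mem_univ _, Finset.mem_range.mp hm⟩
    · intro a ha
      rfl
    · intro m hm
      rfl
  rw [h1, h2, Finset.card_range]

/-- A symmetric QTF on `n` variables has total influence at most
`n · 2^{-n+1} · C(n, (n-1)/2)` for odd `n`, and
`n · 2^{-n} · (2·C(n, (n-2)/2) + C(n, n/2))` for even `n`. -/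
theorem symmetric_qtf_influence_bound {n : ℕ} (f : (Fin n → ℤ) → ℤ)
    (hQTF : ∃ (a : Fin n → Fin n → ℝ) (b : Fin n → ℝ) (c : ℝ),
      (∀ x ∈ cube (Fin n), quadPoly a b c x ≠ 0) ∧
      (∀ x ∈ cube (Fin n), f x = sgn (quadPoly a b c x)))
    (hsym : ∀ σ : Equiv.Perm (Fin n), ∀ x ∈ cube (Fin n), f (x ∘ σ) = f x) :
    (Odd n →
      totalInf f ≤ (n : ℝ) * (n.choose ((n - 1) / 2) : ℝ) / 2 ^ (n - 1)) ∧
    (Even n →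
      totalInf f ≤ (n : ℝ) * (2 * (n.choose ((n - 2) / 2) : ℝ) + (n.choose (n / 2) : ℝ))
        / 2 ^ n) := by
  classical
  obtain ⟨a, b, c, hnz, hrep⟩ := hQTF
  by_cases hn : n < 3
  · -- small cases: total influence is at most n
    have hb := totalInf_le_card f
    rw [Fintype.card_fin] at hb
    constructor
    · intro hodd
      interval_cases n
      · exact absurd hodd (by decide)
      · have hb' : totalInf f ≤ 1 := by exact_mod_cast hb
        norm_num
        exact hb'
      · exact absurd hodd (by decide)
    · intro heven
      interval_cases n
      · have h0 : totalInf f ≤ 0 := by exact_mod_cast hb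
        norm_num
        exact h0
      · exact absurd heven (by decide)
      · have hb' : totalInf f ≤ 2 := by exact_mod_cast hb
        norm_num [Nat.choose]
        exact hb'
  · push_neg at hn
    have hn1 : 1 ≤ n := by omega
    set g : ℕ → ℤ := fun k => f (canon n k) with hgdef
    have hfg : ∀ x ∈ cube (Fin n), f x = g (cnt x) := by
      intro x hx
      obtain ⟨σ, hσ⟩ := exists_perm_of_cnt_eq (canon_mem_cube (k := cnt x)) hx
        (cnt_canon (cnt_le x))
      conv_lhs => rw [← hσ]
      exact hsym σ _ canon_mem_cube
    set A : ℝ := ∑ i : Fin n, ∑ j : Fin n, if i < j then a i j else 0 with hA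
    set B : ℝ := ∑ i : Fin n, b i with hB
    set al : ℝ := ((n-2).factorial : ℝ) * A with hal
    set be : ℝ := ((n-1).factorial : ℝ) * B with hbe
    set ga : ℝ := (n.factorial : ℝ) * c - ((n-2).factorial : ℝ) * A * n with hga
    have hsign : ∀ k, k ≤ n →
        (0 < al*(2*(k:ℝ)-n)^2+be*(2*(k:ℝ)-n)+ga ∧ g k = 1) ∨
        (al*(2*(k:ℝ)-n)^2+be*(2*(k:ℝ)-n)+ga < 0 ∧ g k = -1) := by
      intro k hk
      have hxk : canon n k ∈ cube (Fin n) := canon_mem_cube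
      have hsum : ∑ σ : Equiv.Perm (Fin n), quadPoly a b c ((canon n k) ∘ σ)
          = al*(2*(k:ℝ)-n)^2+be*(2*(k:ℝ)-n)+ga := by
        rw [sum_perm_quadPoly (by omega) a b c _ hxk, sum_coords hxk, cnt_canon hk,
          hal, hbe, hga, hA, hB]
        ring
      have hval : f (canon n k) = sgn (quadPoly a b c (canon n k)) := hrep _ hxk
      have hterm : ∀ ε : ℤ, f (canon n k) = ε →
          ∀ σ : Equiv.Perm (Fin n), sgn (quadPoly a b c ((canon n k) ∘ σ)) = ε := by
        intro ε hε σ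
        have hmem := comp_perm_mem_cube hxk σ
        rw [← hrep _ hmem, hsym σ _ hxk, hε]
      rcases sgn_cases (hnz _ hxk) with ⟨hs, _⟩|⟨hs, _⟩
      · left
        constructor
        · rw [← hsum]
          apply Finset.sum_pos
          · intro σ _
            have h1 := hterm 1 (by rw [hval, hs]) σ
            rcases sgn_cases (hnz _ (comp_perm_mem_cube hxk σ)) with ⟨_, h⟩|⟨hs', _⟩
            · exact h
            · rw [h1] at hs'; omega
          · exact Finset.univ_nonempty
        · rw [hgdef]
          show f (canon n k) = 1
          rw [hval, hs]
      · right
        constructor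
        · rw [← hsum]
          apply Finset.sum_neg
          · intro σ _
            have h1 := hterm (-1) (by rw [hval, hs]) σ
            rcases sgn_cases (hnz _ (comp_perm_mem_cube hxk σ)) with ⟨hs', _⟩|⟨_, h⟩
            · rw [h1] at hs'; omega
            · exact h
          · exact Finset.univ_nonempty
        · rw [hgdef]
          show f (canon n k) = -1
          rw [hval, hs]
    have hD2 := card_changes_le_two g al be ga hsign
    set D := (Finset.range n).filter (fun k => g k ≠ g (k+1)) with hDdef
    have hformula : totalInf f = (∑ k ∈ D, 2*(n:ℝ)*(((n-1).choose k : ℕ) : ℝ)) / 2^n := by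
      rw [totalInf_eq hn1 f g hfg]
      congr 1
      rw [hDdef, Finset.sum_filter]
      apply Finset.sum_congr rfl
      intro k _
      split
      · ring
      · ring
    have hsub : D ⊆ Finset.range n := Finset.filter_subset _ _
    have hsum_cast : (∑ k ∈ D, 2*(n:ℝ)*(((n-1).choose k : ℕ) : ℝ))
        = 2*(n:ℝ) * ((∑ k ∈ D, (n-1).choose k : ℕ) : ℝ) := by
      rw [← Finset.mul_sum]
      push_cast
      ring
    have hpow : (0:ℝ) < 2^n := by positivity
    constructor
    · intro hodd
      have hbound := sum_D_odd hn hodd D hsub hD2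
      have hb2 : ((∑ k ∈ D, (n-1).choose k : ℕ) : ℝ) ≤ ((n.choose ((n-1)/2) : ℕ) : ℝ) := by
        exact_mod_cast hbound
      have h2n : (2:ℝ)^n = 2 * 2^(n-1) := by
        rw [← pow_succ']
        congr 1
        omega
      rw [hformula, hsum_cast]
      rw [div_le_iff₀ hpow]
      rw [h2n]
      have hnn : (0:ℝ) ≤ (n:ℝ) := by positivity
      have hp2 : (0:ℝ) < 2^(n-1) := by positivity
      calc 2*(n:ℝ) * ((∑ k ∈ D, (n-1).choose k : ℕ) : ℝ)
          ≤ 2*(n:ℝ) * ((n.choose ((n-1)/2) : ℕ) : ℝ) := by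
            apply mul_le_mul_of_nonneg_left hb2
            positivity
        _ = (n:ℝ) * ((n.choose ((n-1)/2) : ℕ) : ℝ) / 2^(n-1) * (2 * 2^(n-1)) := by
            field_simp
    · intro heven
      have hbound := sum_D_even hn heven D hsub hD2
      have hb2 : (2:ℝ) * ((∑ k ∈ D, (n-1).choose k : ℕ) : ℝ)
          ≤ 2 * ((n.choose ((n-2)/2) : ℕ) : ℝ) + ((n.choose (n/2) : ℕ) : ℝ) := by
        exact_mod_cast hbound
      rw [hformula, hsum_cast]
      rw [div_le_div_iff₀ hpow hpow]
      have hnn : (0:ℝ) ≤ (n:ℝ) := by positivity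
      calc 2*(n:ℝ) * ((∑ k ∈ D, (n-1).choose k : ℕ) : ℝ) * 2^n
          = ((n:ℝ) * (2 * ((∑ k ∈ D, (n-1).choose k : ℕ) : ℝ))) * 2^n := by ring
        _ ≤ ((n:ℝ) * (2 * ((n.choose ((n-2)/2) : ℕ) : ℝ) + ((n.choose (n/2) : ℕ) : ℝ))) * 2^n := by
            apply mul_le_mul_of_nonneg_right _ (le_of_lt hpow)
            exact mul_le_mul_of_nonneg_left hb2 hnn
        _ = (n:ℝ) * (2 * ((n.choose ((n-2)/2) : ℕ) : ℝ) + ((n.choose (n/2) : ℕ) : ℝ)) * 2^n := by ring
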